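/- For every real α, ∫_{-∞}^{∞} sech³(τ) cos(ατ) dτ = π(α²+1) / (2 cosh(πα/2)). -/

import Mathlib

open Real MeasureTheory Set Filter

noncomputable def sech (x : ℝ) : ℝ := (Real.cosh x)⁻¹

lemma sech_pos (x : ℝ) : 0 < sech x := inv_pos.mpr (Real.cosh_pos x)

lemma sech_le_exp (x : ℝ) : sech x ≤ 2 * Real.exp (-|x|) := by
  have h : Real.exp |x| / 2 ≤ Real.cosh x := by
    rw [← Real.cosh_abs, Real.cosh_eq]
    have := Real.exp_pos (-|x|)
    linarith
  have h2 : (0:ℝ) < Real.exp |x| / 2 := by positivity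
  calc sech x ≤ (Real.exp |x| / 2)⁻¹ := inv_anti₀ h2 h
    _ = 2 * Real.exp (-|x|) := by rw [Real.exp_neg]; field_simp

lemma continuous_sech : Continuous sech :=
  Real.continuous_cosh.inv₀ fun x => (Real.cosh_pos x).ne'

lemma integrable_exp_neg_abs : Integrable (fun x : ℝ => Real.exp (-|x|)) := by
  have hIoi : IntegrableOn (fun x : ℝ => Real.exp (-|x|)) (Ioi 0) := by
    have := exp_neg_integrableOn_Ioi 0 (one_pos)
    refine this.congr_fun (fun x hx => ?_) measurableSet_Ioi
    rw [abs_of_pos hx]; simp only [neg_one_mul]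
  have hIic : IntegrableOn (fun x : ℝ => Real.exp (-|x|)) (Iic 0) := by
    rw [← Measure.map_neg_eq_self (volume : Measure ℝ)]
    have m : MeasurableEmbedding fun x : ℝ => -x := (Homeomorph.neg ℝ).measurableEmbedding
    rw [m.integrableOn_map_iff]
    simp_rw [Function.comp_def, abs_neg, neg_preimage, neg_Iic, neg_zero]
    exact Iff.mpr integrableOn_Ici_iff_integrableOn_Ioi hIoi
  have := hIic.union hIoi
  rwa [Iic_union_Ioi, integrableOn_univ] at this

lemma integrable_sech : Integrable sech := by
  refine (integrable_exp_neg_abs.const_mul 2).mono' continuous_sech.aestronglyMeasurable ?_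
  exact ae_of_all _ fun x => by
    rw [Real.norm_eq_abs, abs_of_pos (sech_pos x)]; exact sech_le_exp x

lemma integrable_dom {f : ℝ → ℝ} {C : ℝ} (hf : Continuous f)
    (h : ∀ x, |f x| ≤ C * sech x) : Integrable f :=
  (integrable_sech.const_mul C).mono' hf.aestronglyMeasurable
    (ae_of_all _ fun x => by rw [Real.norm_eq_abs]; exact h x)

lemma cpow_pos_real {x : ℝ} (hx : 0 < x) (z : ℂ) :
    (x : ℂ) ^ z = Complex.exp (z * Real.log x) := by
  rw [Complex.cpow_def_of_ne_zero (by exact_mod_cast hx.ne')]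
  rw [Complex.ofReal_log hx.le]
  ring_nf

lemma sech_cos_integral (α : ℝ) :
    ∫ τ : ℝ, sech τ * Real.cos (α * τ) = π / Real.cosh (π * α / 2) := by
  set s : ℂ := (1 + Complex.I * α) / 2 with hs_def
  have hs : s.re = 1 / 2 := by simp [hs_def]
  have h1s : (1 - s).re = 1 / 2 := by simp [Complex.sub_re, hs]; norm_num
  -- Step 1: Gamma product = beta integral
  have step1 : Complex.Gamma s * Complex.Gamma (1 - s) = Complex.betaIntegral s (1 - s) :=
    by
      rw [Complex.Gamma_mul_Gamma_eq_betaIntegral (by rw [hs]; norm_num) (by rw [h1s]; norm_num)]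
      rw [show s + (1 - s) = 1 by ring, Complex.Gamma_one, one_mul]
  -- Step 2: beta integral as integral over Ioo 0 1
  have step2 : Complex.betaIntegral s (1 - s)
      = ∫ x in Ioo (0:ℝ) 1, (x : ℂ) ^ (s - 1) * ((1:ℂ) - x) ^ (-s) := by
    rw [Complex.betaIntegral, intervalIntegral.integral_of_le zero_le_one,
      integral_Ioc_eq_integral_Ioo]
    congr 1
    ext x
    congr 1
    ring_nf
  -- Step 3: change of variables x = u/(1+u)
  have himg : (fun u : ℝ => u / (1 + u)) '' (Ioi 0) = Ioo 0 1 := by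
    ext x
    constructor
    · rintro ⟨u, hu, rfl⟩
      have hu : (0:ℝ) < u := hu
      constructor
      · positivity
      · rw [div_lt_one (by linarith)]; linarith
    · rintro ⟨hx0, hx1⟩
      refine ⟨x / (1 - x), by apply div_pos hx0; linarith, ?_⟩
      have h1x : (1:ℝ) - x ≠ 0 := by linarith
      show x / (1 - x) / (1 + x / (1 - x)) = x
      have e : (1:ℝ) + x / (1 - x) = 1 / (1 - x) := by field_simp; ring
      rw [e]
      field_simp
  have hderiv : ∀ u ∈ Ioi (0:ℝ),
      HasDerivWithinAt (fun u : ℝ => u / (1 + u)) (((1 + u) ^ 2)⁻¹) (Ioi 0) u := by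
    intro u hu
    have hu : (0:ℝ) < u := hu
    have : HasDerivAt (fun u : ℝ => u / (1 + u))
        ((1 * (1 + u) - u * 1) / (1 + u) ^ 2) u := by
      exact (hasDerivAt_id u).div ((hasDerivAt_id u).const_add 1) (by linarith)
    have h2 : (1 * (1 + u) - u * 1) / (1 + u) ^ 2 = ((1 + u) ^ 2)⁻¹ := by
      field_simp
      ring
    rw [h2] at this
    exact this.hasDerivWithinAt
  have hinj : InjOn (fun u : ℝ => u / (1 + u)) (Ioi 0) := by
    intro a ha b hb h
    have ha : (0:ℝ) < a := ha
    have hb : (0:ℝ) < b := hb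
    field_simp at h
    linarith
  have step3 : (∫ x in Ioo (0:ℝ) 1, (x : ℂ) ^ (s - 1) * ((1:ℂ) - x) ^ (-s))
      = ∫ u in Ioi (0:ℝ), |((1 + u) ^ 2)⁻¹| •
          (((u / (1 + u) : ℝ) : ℂ) ^ (s - 1) * ((1:ℂ) - ((u / (1 + u) : ℝ) : ℂ)) ^ (-s)) := by
    rw [← himg, integral_image_eq_integral_abs_deriv_smul measurableSet_Ioi hderiv hinj]
  -- Step 4: pointwise simplification
  have step4 : (∫ u in Ioi (0:ℝ), |((1 + u) ^ 2)⁻¹| •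
          (((u / (1 + u) : ℝ) : ℂ) ^ (s - 1) * ((1:ℂ) - ((u / (1 + u) : ℝ) : ℂ)) ^ (-s)))
      = ∫ u in Ioi (0:ℝ), (u : ℂ) ^ (s - 1) / (1 + u) := by
    refine setIntegral_congr_fun measurableSet_Ioi fun u hu => ?_
    have hu : (0:ℝ) < u := hu
    have h1u : (0:ℝ) < 1 + u := by linarith
    have hfrac : (0:ℝ) < u / (1 + u) := by positivity
    have hneC : ((1:ℂ) + (u:ℂ)) ≠ 0 := by
      have : ((1 + u : ℝ) : ℂ) ≠ 0 := by exact_mod_cast h1u.ne'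
      push_cast at this
      exact this
    have hrem : ((1:ℂ) - ((u / (1 + u) : ℝ) : ℂ)) = (((1 + u)⁻¹ : ℝ) : ℂ) := by
      push_cast
      field_simp
      ring
    rw [hrem, cpow_pos_real hfrac, cpow_pos_real (by positivity : (0:ℝ) < (1+u)⁻¹),
      cpow_pos_real hu, Real.log_div hu.ne' h1u.ne', Real.log_inv]
    have habs : |((1 + u) ^ 2)⁻¹| = ((1 + u) ^ 2)⁻¹ := abs_of_pos (by positivity)
    rw [habs, Complex.real_smul, ← Complex.exp_add]
    push_cast
    rw [show (s - 1) * ((Real.log u : ℂ) - (Real.log (1 + u) : ℂ)) + -s * (-(Real.log (1 + u) : ℂ))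
        = (s - 1) * (Real.log u : ℂ) + ((Real.log (1 + u) : ℝ) : ℂ) from by push_cast; ring]
    rw [Complex.exp_add, ← Complex.ofReal_exp, Real.exp_log h1u]
    push_cast
    field_simp
  -- Step 5: substitution u = exp (2τ)
  have himg2 : (fun τ : ℝ => Real.exp (2 * τ)) '' univ = Ioi 0 := by
    rw [image_univ]
    ext x
    simp only [mem_range, mem_Ioi]
    constructor
    · rintro ⟨τ, rfl⟩; exact Real.exp_pos _
    · intro hx
      exact ⟨Real.log x / 2, by
        rw [show 2 * (Real.log x / 2) = Real.log x by ring, Real.exp_log hx]⟩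
  have hderiv2 : ∀ τ ∈ (univ : Set ℝ),
      HasDerivWithinAt (fun τ : ℝ => Real.exp (2 * τ)) (2 * Real.exp (2 * τ)) univ τ := by
    intro τ _
    have h1 : HasDerivAt (fun τ : ℝ => 2 * τ) 2 τ := by
      simpa using (hasDerivAt_id τ).const_mul (2:ℝ)
    have h2 := h1.exp
    rw [mul_comm] at h2
    exact h2.hasDerivWithinAt
  have hinj2 : InjOn (fun τ : ℝ => Real.exp (2 * τ)) univ := by
    intro a _ b _ h
    have := Real.exp_eq_exp.mp h
    linarith
  have step5 : (∫ u in Ioi (0:ℝ), (u : ℂ) ^ (s - 1) / (1 + u))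
      = ∫ τ : ℝ, |2 * Real.exp (2 * τ)| •
          (((Real.exp (2 * τ) : ℝ) : ℂ) ^ (s - 1) / (1 + ((Real.exp (2 * τ) : ℝ) : ℂ))) := by
    rw [← himg2, integral_image_eq_integral_abs_deriv_smul MeasurableSet.univ hderiv2 hinj2,
      setIntegral_univ]
  -- Step 6: pointwise to sech * exp(Iατ)
  have step6 : (∫ τ : ℝ, |2 * Real.exp (2 * τ)| •
          (((Real.exp (2 * τ) : ℝ) : ℂ) ^ (s - 1) / (1 + ((Real.exp (2 * τ) : ℝ) : ℂ))))
      = ∫ τ : ℝ, ((sech τ : ℝ) : ℂ) * Complex.exp (Complex.I * (α * τ)) := by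
    congr 1
    funext τ
    have he : (0:ℝ) < Real.exp (2 * τ) := Real.exp_pos _
    have habs : |2 * Real.exp (2 * τ)| = 2 * Real.exp (2 * τ) := abs_of_pos (by positivity)
    rw [habs, Complex.real_smul, cpow_pos_real he, Real.log_exp]
    rw [show (s - 1) * ((2 * τ : ℝ) : ℂ) = Complex.I * ((α * τ : ℝ) : ℂ) + ((-τ : ℝ) : ℂ) from by
      rw [hs_def]; push_cast; ring]
    rw [Complex.exp_add,
      show Complex.exp ((-τ : ℝ) : ℂ) = ((Real.exp (-τ) : ℝ) : ℂ) from (Complex.ofReal_exp _).symm]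
    have hsech : sech τ = 2 * Real.exp (2 * τ) * Real.exp (-τ) / (1 + Real.exp (2 * τ)) := by
      rw [sech, Real.cosh_eq, show (2:ℝ) * τ = τ + τ from by ring, Real.exp_add]
      have h1 : Real.exp τ ≠ 0 := (Real.exp_pos τ).ne'
      rw [Real.exp_neg τ]
      field_simp
      ring
    rw [hsech]
    have hne : (1 : ℂ) + ((Real.exp (2 * τ) : ℝ) : ℂ) ≠ 0 := by
      intro hcon
      have h0 : (1 + Real.exp (2 * τ) : ℝ) = 0 := by exact_mod_cast hcon
      linarith [Real.exp_pos (2 * τ)]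
    push_cast
    field_simp
  -- Step 7: split into real and imaginary parts
  have hcos_int : Integrable fun τ : ℝ => sech τ * Real.cos (α * τ) := by
    refine integrable_dom (C := 1) (continuous_sech.mul (Real.continuous_cos.comp
      (continuous_const.mul continuous_id))) fun x => ?_
    rw [abs_mul, abs_of_pos (sech_pos x), one_mul]
    calc sech x * |Real.cos (α * x)| ≤ sech x * 1 := by
          exact mul_le_mul_of_nonneg_left (Real.abs_cos_le_one _) (sech_pos x).le
      _ = sech x := mul_one _
  have hsin_int : Integrable fun τ : ℝ => sech τ * Real.sin (α * τ) := by
    refine integrable_dom (C := 1) (continuous_sech.mul (Real.continuous_sin.comp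
      (continuous_const.mul continuous_id))) fun x => ?_
    rw [abs_mul, abs_of_pos (sech_pos x), one_mul]
    calc sech x * |Real.sin (α * x)| ≤ sech x * 1 := by
          exact mul_le_mul_of_nonneg_left (Real.abs_sin_le_one _) (sech_pos x).le
      _ = sech x := mul_one _
  have hodd : (∫ τ : ℝ, sech τ * Real.sin (α * τ)) = 0 := by
    have h := integral_neg_eq_self (fun τ : ℝ => sech τ * Real.sin (α * τ)) (volume : Measure ℝ)
    simp only [sech, Real.cosh_neg, mul_neg, Real.sin_neg, neg_mul, mul_neg] at h
    rw [integral_neg] at h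
    simp only [sech]
    linarith
  have step7 : (∫ τ : ℝ, ((sech τ : ℝ) : ℂ) * Complex.exp (Complex.I * (α * τ)))
      = ((∫ τ : ℝ, sech τ * Real.cos (α * τ) : ℝ) : ℂ) := by
    have heq : (fun τ : ℝ => ((sech τ : ℝ) : ℂ) * Complex.exp (Complex.I * (α * τ)))
        = fun τ : ℝ => ((sech τ * Real.cos (α * τ) : ℝ) : ℂ)
            + Complex.I * ((sech τ * Real.sin (α * τ) : ℝ) : ℂ) := by
      funext τ
      rw [show Complex.I * ((α : ℂ) * (τ : ℂ)) = ((α * τ : ℝ) : ℂ) * Complex.I from by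
        push_cast; ring, Complex.exp_mul_I]
      push_cast
      ring
    rw [heq]
    have hI1 : Integrable (fun τ : ℝ => ((sech τ * Real.cos (α * τ) : ℝ) : ℂ)) volume :=
      hcos_int.ofReal
    have hI2 : Integrable (fun τ : ℝ => Complex.I * ((sech τ * Real.sin (α * τ) : ℝ) : ℂ))
        volume := hsin_int.ofReal.const_mul _
    rw [integral_add hI1 hI2, integral_const_mul]
    have e1 : ∫ τ : ℝ, ((sech τ * Real.cos (α * τ) : ℝ) : ℂ)
        = ((∫ τ : ℝ, sech τ * Real.cos (α * τ) : ℝ) : ℂ) := integral_ofReal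
    have e2 : ∫ τ : ℝ, ((sech τ * Real.sin (α * τ) : ℝ) : ℂ)
        = ((∫ τ : ℝ, sech τ * Real.sin (α * τ) : ℝ) : ℂ) := integral_ofReal
    rw [e1, e2, hodd]
    simp
  -- Step 8: evaluate sin (π s)
  have hsin : Complex.sin ((π : ℂ) * s) = ((Real.cosh (π * α / 2) : ℝ) : ℂ) := by
    rw [show ((π : ℂ) * s) = (π : ℂ) / 2 - (-(((π * α / 2 : ℝ) : ℂ) * Complex.I)) from by
      rw [hs_def]; push_cast; ring]
    rw [Complex.sin_pi_div_two_sub, Complex.cos_neg, Complex.cos_mul_I, Complex.ofReal_cosh]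
  -- Assemble
  have final : ((∫ τ : ℝ, sech τ * Real.cos (α * τ) : ℝ) : ℂ)
      = ((π : ℝ) : ℂ) / ((Real.cosh (π * α / 2) : ℝ) : ℂ) := by
    rw [← step7, ← step6, ← step5, ← step4, ← step3, ← step2, ← step1,
      Complex.Gamma_mul_Gamma_one_sub, hsin]
  have hcoshne : Real.cosh (π * α / 2) ≠ 0 := (Real.cosh_pos _).ne'
  exact_mod_cast final

lemma sech_le_one (x : ℝ) : sech x ≤ 1 := by
  rw [sech]
  exact inv_le_one_of_one_le₀ (Real.one_le_cosh x)

lemma abs_sinh_le_cosh (x : ℝ) : |Real.sinh x| ≤ Real.cosh x := by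
  rw [abs_le]
  constructor
  · have := Real.sinh_lt_cosh (-x)
    rw [Real.sinh_neg, Real.cosh_neg] at this
    linarith
  · exact (Real.sinh_lt_cosh x).le

lemma tendsto_sech_atTop : Filter.Tendsto sech atTop (nhds 0) := by
  have h2 : Filter.Tendsto (fun x : ℝ => 2 * Real.exp (-x)) atTop (nhds 0) := by
    simpa using Real.tendsto_exp_neg_atTop_nhds_zero.const_mul 2
  refine squeeze_zero (fun x => (sech_pos x).le) (fun x => ?_) h2
  exact (sech_le_exp x).trans (by
    have : -|x| ≤ -x := neg_le_neg (le_abs_self x)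
    nlinarith [Real.exp_le_exp.mpr this, Real.exp_pos (-|x|)])

lemma tendsto_sech_atBot : Filter.Tendsto sech atBot (nhds 0) := by
  have h2 : Filter.Tendsto (fun x : ℝ => 2 * Real.exp x) atBot (nhds 0) := by
    simpa using Real.tendsto_exp_atBot.const_mul 2
  refine squeeze_zero (fun x => (sech_pos x).le) (fun x => ?_) h2
  exact (sech_le_exp x).trans (by
    have : -|x| ≤ x := neg_abs_le x
    nlinarith [Real.exp_le_exp.mpr this, Real.exp_pos (-|x|)])

theorem sech3_cos_integral (α : ℝ) :
    ∫ τ : ℝ, (sech τ) ^ 3 * Real.cos (α * τ)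
      = Real.pi * (α ^ 2 + 1) / (2 * Real.cosh (Real.pi * α / 2)) := by
  set F : ℝ → ℝ := fun τ =>
    Real.sinh τ * Real.cos (α * τ) / (2 * Real.cosh τ ^ 2)
      - α * Real.sin (α * τ) / (2 * Real.cosh τ) with hF_def
  set G : ℝ → ℝ := fun τ =>
    sech τ ^ 3 * Real.cos (α * τ) - (1 + α ^ 2) / 2 * (sech τ * Real.cos (α * τ)) with hG_def
  have hcoshpos : ∀ τ : ℝ, (0:ℝ) < Real.cosh τ := Real.cosh_pos
  -- derivative
  have hF : ∀ τ : ℝ, HasDerivAt F (G τ) τ := by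
    intro τ
    have hcos : HasDerivAt (fun τ : ℝ => Real.cos (α * τ)) (-Real.sin (α * τ) * α) τ := by
      simpa [Function.comp_def] using (Real.hasDerivAt_cos (α * τ)).comp τ ((hasDerivAt_id τ).const_mul α)
    have hsin : HasDerivAt (fun τ : ℝ => Real.sin (α * τ)) (Real.cos (α * τ) * α) τ := by
      simpa [Function.comp_def] using (Real.hasDerivAt_sin (α * τ)).comp τ ((hasDerivAt_id τ).const_mul α)
    have h1 : HasDerivAt (fun τ : ℝ => Real.sinh τ * Real.cos (α * τ))
        (Real.cosh τ * Real.cos (α * τ) + Real.sinh τ * (-Real.sin (α * τ) * α)) τ :=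
      (Real.hasDerivAt_sinh τ).mul hcos
    have h2 : HasDerivAt (fun τ : ℝ => 2 * Real.cosh τ ^ 2)
        (2 * ((2:ℕ) * Real.cosh τ ^ 1 * Real.sinh τ)) τ :=
      ((Real.hasDerivAt_cosh τ).pow 2).const_mul 2
    have hne1 : 2 * Real.cosh τ ^ 2 ≠ 0 := by positivity
    have hq1 := h1.div h2 hne1
    have h3 : HasDerivAt (fun τ : ℝ => α * Real.sin (α * τ)) (α * (Real.cos (α * τ) * α)) τ :=
      hsin.const_mul α
    have h4 : HasDerivAt (fun τ : ℝ => 2 * Real.cosh τ) (2 * Real.sinh τ) τ :=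
      (Real.hasDerivAt_cosh τ).const_mul 2
    have hne2 : 2 * Real.cosh τ ≠ 0 := by positivity
    have hq2 := h3.div h4 hne2
    have := hq1.sub hq2
    refine this.congr_deriv (Eq.symm ?_)
    have hid : Real.sinh τ ^ 2 = Real.cosh τ ^ 2 - 1 := Real.sinh_sq τ
    have hch := (hcoshpos τ).ne'
    simp only [hG_def, sech]
    field_simp
    ring_nf
    linear_combination (2 * Real.cos (α * τ)) * hid
  -- integrability of G
  have hsech3_le : ∀ x : ℝ, sech x ^ 3 ≤ sech x := by
    intro x
    calc sech x ^ 3 ≤ sech x ^ 1 :=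
          pow_le_pow_of_le_one (sech_pos x).le (sech_le_one x) (by norm_num)
      _ = sech x := pow_one _
  have hGcont : Continuous G := by
    apply Continuous.sub
    · exact (continuous_sech.pow 3).mul (Real.continuous_cos.comp (continuous_const.mul
        continuous_id))
    · exact continuous_const.mul (continuous_sech.mul (Real.continuous_cos.comp
        (continuous_const.mul continuous_id)))
  have hGint : Integrable G := by
    refine integrable_dom (C := 1 + (1 + α ^ 2) / 2) hGcont fun x => ?_
    have hc1 : |Real.cos (α * x)| ≤ 1 := Real.abs_cos_le_one _
    have h1 : |sech x ^ 3 * Real.cos (α * x)| ≤ sech x := by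
      rw [abs_mul, abs_of_pos (pow_pos (sech_pos x) 3)]
      calc sech x ^ 3 * |Real.cos (α * x)| ≤ sech x ^ 3 * 1 :=
            mul_le_mul_of_nonneg_left hc1 (pow_pos (sech_pos x) 3).le
        _ = sech x ^ 3 := mul_one _
        _ ≤ sech x := hsech3_le x
    have h2 : |(1 + α ^ 2) / 2 * (sech x * Real.cos (α * x))| ≤ (1 + α ^ 2) / 2 * sech x := by
      rw [abs_mul, abs_mul, abs_of_pos (sech_pos x), abs_of_pos (by positivity : (0:ℝ) < (1 + α ^ 2) / 2)]
      have : sech x * |Real.cos (α * x)| ≤ sech x * 1 :=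
        mul_le_mul_of_nonneg_left hc1 (sech_pos x).le
      nlinarith [sech_pos x]
    calc |G x| ≤ |sech x ^ 3 * Real.cos (α * x)| + |(1 + α ^ 2) / 2 * (sech x * Real.cos (α * x))| := by
          simp only [hG_def]; exact abs_sub _ _
      _ ≤ sech x + (1 + α ^ 2) / 2 * sech x := add_le_add h1 h2
      _ = (1 + (1 + α ^ 2) / 2) * sech x := by ring
  -- bound on F
  have hFbound : ∀ τ : ℝ, ‖F τ‖ ≤ (1 + |α|) / 2 * sech τ := by
    intro τ
    have hc := hcoshpos τ
    have h1 : |Real.sinh τ * Real.cos (α * τ) / (2 * Real.cosh τ ^ 2)| ≤ sech τ / 2 := by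
      rw [abs_div, abs_of_pos (by positivity : (0:ℝ) < 2 * Real.cosh τ ^ 2)]
      have hnum : |Real.sinh τ * Real.cos (α * τ)| ≤ Real.cosh τ := by
        rw [abs_mul]
        calc |Real.sinh τ| * |Real.cos (α * τ)| ≤ Real.cosh τ * 1 :=
              mul_le_mul (abs_sinh_le_cosh τ) (Real.abs_cos_le_one _) (abs_nonneg _) hc.le
          _ = Real.cosh τ := mul_one _
      calc |Real.sinh τ * Real.cos (α * τ)| / (2 * Real.cosh τ ^ 2)
          ≤ Real.cosh τ / (2 * Real.cosh τ ^ 2) := by gcongr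
        _ = sech τ / 2 := by rw [sech]; field_simp
    have h2 : |α * Real.sin (α * τ) / (2 * Real.cosh τ)| ≤ |α| * sech τ / 2 := by
      rw [abs_div, abs_of_pos (by positivity : (0:ℝ) < 2 * Real.cosh τ), abs_mul]
      have hnum : |α| * |Real.sin (α * τ)| ≤ |α| := by
        calc |α| * |Real.sin (α * τ)| ≤ |α| * 1 :=
              mul_le_mul_of_nonneg_left (Real.abs_sin_le_one _) (abs_nonneg _)
          _ = |α| := mul_one _
      calc |α| * |Real.sin (α * τ)| / (2 * Real.cosh τ) ≤ |α| / (2 * Real.cosh τ) :=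
            (div_le_div_iff_of_pos_right (by positivity)).mpr hnum
        _ = |α| * sech τ / 2 := by rw [sech]; ring
    calc ‖F τ‖ ≤ |Real.sinh τ * Real.cos (α * τ) / (2 * Real.cosh τ ^ 2)|
          + |α * Real.sin (α * τ) / (2 * Real.cosh τ)| := by
          simp only [hF_def, Real.norm_eq_abs]; exact abs_sub _ _
      _ ≤ sech τ / 2 + |α| * sech τ / 2 := add_le_add h1 h2
      _ = (1 + |α|) / 2 * sech τ := by ring
  have hFtop : Filter.Tendsto F atTop (nhds 0) := by
    refine squeeze_zero_norm hFbound ?_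
    simpa using tendsto_sech_atTop.const_mul ((1 + |α|) / 2)
  have hFbot : Filter.Tendsto F atBot (nhds 0) := by
    refine squeeze_zero_norm hFbound ?_
    simpa using tendsto_sech_atBot.const_mul ((1 + |α|) / 2)
  -- FTC on the two half-lines
  have hIoi : ∫ τ in Ioi (0:ℝ), G τ = 0 - F 0 :=
    integral_Ioi_of_hasDerivAt_of_tendsto' (fun x _ => hF x) hGint.integrableOn hFtop
  have hIic : ∫ τ in Iic (0:ℝ), G τ = F 0 - 0 :=
    integral_Iic_of_hasDerivAt_of_tendsto (hF 0).continuousAt.continuousWithinAt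
      (fun x _ => hF x) hGint.integrableOn hFbot
  have hG0 : ∫ τ : ℝ, G τ = 0 := by
    have hu := setIntegral_union (s := Iic (0:ℝ)) (t := Ioi (0:ℝ))
      (Iic_disjoint_Ioi le_rfl) measurableSet_Ioi hGint.integrableOn hGint.integrableOn
    rw [Iic_union_Ioi] at hu
    rw [setIntegral_univ] at hu
    rw [hu, hIic, hIoi]
    ring
  -- integrability of sech * cos
  have hcos_int : Integrable fun τ : ℝ => sech τ * Real.cos (α * τ) := by
    refine integrable_dom (C := 1) (continuous_sech.mul (Real.continuous_cos.comp
      (continuous_const.mul continuous_id))) fun x => ?_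
    rw [abs_mul, abs_of_pos (sech_pos x), one_mul]
    calc sech x * |Real.cos (α * x)| ≤ sech x * 1 :=
          mul_le_mul_of_nonneg_left (Real.abs_cos_le_one _) (sech_pos x).le
      _ = sech x := mul_one _
  -- assemble
  have hsplit : ∀ τ : ℝ, sech τ ^ 3 * Real.cos (α * τ)
      = G τ + (1 + α ^ 2) / 2 * (sech τ * Real.cos (α * τ)) := by
    intro τ; simp only [hG_def]; ring
  calc ∫ τ : ℝ, sech τ ^ 3 * Real.cos (α * τ)
      = ∫ τ : ℝ, (G τ + (1 + α ^ 2) / 2 * (sech τ * Real.cos (α * τ))) := by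
        congr 1; funext τ; exact hsplit τ
    _ = (∫ τ : ℝ, G τ) + ∫ τ : ℝ, (1 + α ^ 2) / 2 * (sech τ * Real.cos (α * τ)) :=
        integral_add hGint (hcos_int.const_mul _)
    _ = (1 + α ^ 2) / 2 * ∫ τ : ℝ, sech τ * Real.cos (α * τ) := by
        rw [hG0, integral_const_mul, zero_add]
    _ = (1 + α ^ 2) / 2 * (π / Real.cosh (π * α / 2)) := by rw [sech_cos_integral]
    _ = Real.pi * (α ^ 2 + 1) / (2 * Real.cosh (Real.pi * α / 2)) := by
        have := (Real.cosh_pos (π * α / 2)).ne'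
        field_simp
        ring
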